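/- Let S be a commutative ℚ-algebra, ψ a Dirichlet character over S of level n, and m a natural number. For every positive natural number F that is a multiple of the conductor of ψ, the m-th generalized Bernoulli number satisfies B_{m,ψ} = F^{m-1} · ∑_{a=1}^{F} ψ₀(a) · B_m(a/F), where ψ₀ is the primitive character associated to ψ evaluated via its zero-extended associated function, and B_m is the m-th Bernoulli polynomial evaluated at a/F via algebraMap ℚ S. -/

import Mathlib

open scoped BigOperators


/-- A Dirichlet character of level `n` over a monoid `R` is a monoid homomorphism
`(ZMod n)ˣ →* Rˣ`. -/
abbrev DirichletChar (R : Type*) [Monoid R] (n : ℕ) := (ZMod n)ˣ →* Rˣ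

namespace DirichletChar

variable {R : Type*} [Monoid R] {n : ℕ}

/-- The function `ZMod n → R` associated to a Dirichlet character, extending it by
zero on non-units. -/
noncomputable def asso {S : Type*} [MonoidWithZero S] {m : ℕ} (χ : DirichletChar S m) :
    ZMod m → S :=
  Function.extend (Units.coeHom (ZMod m)) ((Units.coeHom S) ∘ χ) 0

/-- Extend a Dirichlet character of level `n` to level `m` when `n ∣ m`. -/
def changeLevel {m : ℕ} (h : n ∣ m) (χ : DirichletChar R n) : DirichletChar R m :=
  χ.comp (Units.map (ZMod.castHom h (ZMod n)).toMonoidHom)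

/-- `χ` factors through `d` if `d ∣ n` and `χ` is the extension to level `n` of a
character of level `d`. -/
def FactorsThrough (χ : DirichletChar R n) (d : ℕ) : Prop :=
  ∃ (h : d ∣ n) (χ₀ : DirichletChar R d), χ = changeLevel h χ₀

/-- The conductor of a Dirichlet character : the least level through which it factors. -/
noncomputable def conductor (χ : DirichletChar R n) : ℕ :=
  sInf {d : ℕ | χ.FactorsThrough d}

/-- A Dirichlet character is primitive if its conductor equals its level. -/
def IsPrimitive (χ : DirichletChar R n) : Prop := χ.conductor = n

lemma factorsThrough_self (χ : DirichletChar R n) : χ.FactorsThrough n := by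
  refine ⟨dvd_rfl, χ, ?_⟩
  show χ = χ.comp (Units.map (ZMod.castHom dvd_rfl (ZMod n)).toMonoidHom)
  rw [ZMod.castHom_self]
  ext x
  simp

lemma factorsThrough_conductor (χ : DirichletChar R n) : χ.FactorsThrough χ.conductor := by
  have h : {d : ℕ | χ.FactorsThrough d}.Nonempty := ⟨n, χ.factorsThrough_self⟩
  exact Nat.sInf_mem h

/-- The primitive character associated to a Dirichlet character : a character of
level the conductor through which it factors. -/
noncomputable def assoPrimitive (χ : DirichletChar R n) : DirichletChar R χ.conductor :=
  χ.factorsThrough_conductor.choose_spec.choose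

/-- The multiplication of two Dirichlet characters : the primitive character associated to
the product of their extensions to the lcm of the levels. -/
noncomputable def dmul {S : Type*} [CommMonoid S] {m k : ℕ} (χ₁ : DirichletChar S m)
    (χ₂ : DirichletChar S k) :
    DirichletChar S (changeLevel (dvd_lcm_left m k) χ₁ *
      changeLevel (dvd_lcm_right m k) χ₂).conductor :=
  assoPrimitive _

/-- A Dirichlet character is even if it sends `-1` to `1`. -/
def IsEven (χ : DirichletChar R n) : Prop := ((χ (-1) : Rˣ) : R) = 1

/-- A Dirichlet character is odd if it sends `-1` to `-1`. -/
def IsOdd {S : Type*} [Monoid S] [HasDistribNeg S] {m : ℕ} (χ : DirichletChar S m) : Prop :=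
  ((χ (-1) : Sˣ) : S) = -1

end DirichletChar
/-- The `m`-th generalized Bernoulli number of a Dirichlet character. -/
noncomputable def generalBernoulliNumber {S : Type*} [CommSemiring S] [Algebra ℚ S] {n : ℕ}
    (ψ : DirichletChar S n) (m : ℕ) : S :=
  algebraMap ℚ S ((ψ.conductor : ℚ) ^ ((m : ℤ) - 1)) *
    ∑ a ∈ Finset.range ψ.conductor,
      ψ.assoPrimitive.asso (a.succ : ZMod ψ.conductor) *
        algebraMap ℚ S ((Polynomial.bernoulli m).eval ((a.succ : ℚ) / (ψ.conductor : ℚ)))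


section AuxLemmas
open PowerSeries Finset Nat

lemma aux_sum_range_mul {M : Type*} [AddCommMonoid M] (c d : ℕ) (f : ℕ → M) :
    ∑ a ∈ Finset.range (c * d), f a =
      ∑ r ∈ Finset.range c, ∑ j ∈ Finset.range d, f (j * c + r) := by
  induction d with
  | zero => simp
  | succ d ih =>
    rw [Nat.mul_succ, Finset.sum_range_add, ih]
    simp_rw [Finset.sum_range_succ, Finset.sum_add_distrib]
    congr 1
    refine Finset.sum_congr rfl fun r _ => ?_
    rw [mul_comm c d]

lemma aux_scal (c d : ℕ) (hc : (c:ℚ) ≠ 0) (hd : (d:ℚ) ≠ 0) (m : ℕ) :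
    (((c*d : ℕ)):ℚ)^((m:ℤ)-1) * ((d:ℚ) * (1/(d:ℚ))^m) = (c:ℚ)^((m:ℤ)-1) := by
  push_cast
  rw [mul_zpow]
  have h1 : (d:ℚ) * (1/(d:ℚ))^m = (d:ℚ)^((1:ℤ)-(m:ℤ)) := by
    rw [zpow_sub₀ hd, zpow_one, zpow_natCast, one_div, inv_pow, div_eq_mul_inv]
  have h0 : ((m:ℤ)-1) + ((1:ℤ)-(m:ℤ)) = 0 := by ring
  rw [h1, mul_assoc, ← zpow_add₀ hd, h0, zpow_zero, mul_one]

lemma aux_geom (k : ℕ) (hk : k ≠ 0) :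
    (∑ j ∈ range k, rescale ((j : ℚ)/k) (exp ℚ)) * (rescale ((1:ℚ)/k) (exp ℚ) - 1) =
      exp ℚ - 1 := by
  rw [Finset.sum_mul]
  have : ∀ j : ℕ, rescale ((j : ℚ)/k) (exp ℚ) * (rescale ((1:ℚ)/k) (exp ℚ) - 1)
      = rescale (((j+1 : ℕ) : ℚ)/k) (exp ℚ) - rescale ((j : ℚ)/k) (exp ℚ) := by
    intro j
    rw [mul_sub, mul_one, exp_mul_exp_eq_exp_add]
    push_cast
    ring_nf
  simp_rw [this]
  rw [Finset.sum_range_sub (fun j => rescale ((j : ℚ)/k) (exp ℚ))]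
  simp [div_self (show (k:ℚ) ≠ 0 by exact_mod_cast hk), rescale_zero]

lemma bernoulli_eval_mul_aux (m k : ℕ) (hk : k ≠ 0) (x : ℚ) :
    ∑ j ∈ range k, (Polynomial.bernoulli m).eval (x + (j : ℚ)/k) =
      (k : ℚ) * (1/(k:ℚ))^m * (Polynomial.bernoulli m).eval ((k : ℚ) * x) := by
  have hk' : (k : ℚ) ≠ 0 := by exact_mod_cast hk
  have hexp : exp ℚ - 1 ≠ 0 := by
    intro h
    have := congrArg (PowerSeries.coeff (R := ℚ) 1) h
    simp [coeff_exp] at this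
  have hexp2 : rescale ((1:ℚ)/k) (exp ℚ) - 1 ≠ 0 := by
    intro h
    have := congrArg (PowerSeries.coeff (R := ℚ) 1) h
    simp [coeff_rescale, coeff_exp, hk'] at this
  have h1 : (∑ j ∈ range k, PowerSeries.mk fun n => Polynomial.aeval (x + (j:ℚ)/k)
      ((1 / n ! : ℚ) • Polynomial.bernoulli n)) * (exp ℚ - 1)
      = PowerSeries.X * rescale x (exp ℚ) * (∑ j ∈ range k, rescale ((j:ℚ)/k) (exp ℚ)) := by
    rw [Finset.sum_mul, Finset.mul_sum]
    refine Finset.sum_congr rfl fun j _ => ?_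
    rw [Polynomial.bernoulli_generating_function (x + (j:ℚ)/k), ← exp_mul_exp_eq_exp_add]
    ring
  have h3 : rescale ((1:ℚ)/k) ((PowerSeries.mk fun n => Polynomial.aeval ((k:ℚ)*x)
      ((1 / n ! : ℚ) • Polynomial.bernoulli n)) * (exp ℚ - 1))
      = rescale ((1:ℚ)/k) (PowerSeries.X * rescale ((k:ℚ)*x) (exp ℚ)) := by
    rw [Polynomial.bernoulli_generating_function ((k:ℚ)*x)]
  rw [map_mul, map_mul, map_sub, map_one, rescale_rescale] at h3
  have hxk : (k:ℚ)*x*((1:ℚ)/k) = x := by field_simp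
  rw [hxk] at h3
  have hX : rescale ((1:ℚ)/k) (PowerSeries.X : PowerSeries ℚ) = C (R := ℚ) ((1:ℚ)/k) * PowerSeries.X := by
    ext n
    rcases eq_or_ne n 1 with rfl | h
    · simp [coeff_rescale, PowerSeries.coeff_X]
    · simp [coeff_rescale, PowerSeries.coeff_X, h]
  rw [hX] at h3
  have key : (∑ j ∈ range k, PowerSeries.mk fun n => Polynomial.aeval (x + (j:ℚ)/k)
      ((1 / n ! : ℚ) • Polynomial.bernoulli n))
      = C (R := ℚ) (k:ℚ) * rescale ((1:ℚ)/k) (PowerSeries.mk fun n => Polynomial.aeval ((k:ℚ)*x)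
        ((1 / n ! : ℚ) • Polynomial.bernoulli n)) := by
    have hcancel : (∑ j ∈ range k, PowerSeries.mk fun n => Polynomial.aeval (x + (j:ℚ)/k)
        ((1 / n ! : ℚ) • Polynomial.bernoulli n)) * ((exp ℚ - 1) * (rescale ((1:ℚ)/k) (exp ℚ) - 1))
        = (C (R := ℚ) (k:ℚ) * rescale ((1:ℚ)/k) (PowerSeries.mk fun n => Polynomial.aeval ((k:ℚ)*x)
        ((1 / n ! : ℚ) • Polynomial.bernoulli n))) * ((exp ℚ - 1) * (rescale ((1:ℚ)/k) (exp ℚ) - 1)) := by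
      calc _ = (∑ j ∈ range k, PowerSeries.mk fun n => Polynomial.aeval (x + (j:ℚ)/k)
            ((1 / n ! : ℚ) • Polynomial.bernoulli n)) * (exp ℚ - 1) * (rescale ((1:ℚ)/k) (exp ℚ) - 1) := by ring
        _ = PowerSeries.X * rescale x (exp ℚ) * ((∑ j ∈ range k, rescale ((j:ℚ)/k) (exp ℚ)) * (rescale ((1:ℚ)/k) (exp ℚ) - 1)) := by rw [h1]; ring
        _ = PowerSeries.X * rescale x (exp ℚ) * (exp ℚ - 1) := by rw [aux_geom k hk]
        _ = C (R := ℚ) (k:ℚ) * (C (R := ℚ) ((1:ℚ)/k) * PowerSeries.X * rescale x (exp ℚ)) * (exp ℚ - 1) := by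
            rw [← mul_assoc, ← mul_assoc, ← map_mul]
            field_simp
            rw [map_one, one_mul]
        _ = C (R := ℚ) (k:ℚ) * (rescale ((1:ℚ)/k) (PowerSeries.mk fun n => Polynomial.aeval ((k:ℚ)*x)
            ((1 / n ! : ℚ) • Polynomial.bernoulli n)) * (rescale ((1:ℚ)/k) (exp ℚ) - 1)) * (exp ℚ - 1) := by rw [h3]
        _ = _ := by ring
    exact mul_right_cancel₀ (mul_ne_zero hexp hexp2) hcancel
  have hco := congrArg (PowerSeries.coeff (R := ℚ) m) key
  simp only [map_sum, PowerSeries.coeff_mk, PowerSeries.coeff_C_mul, coeff_rescale,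
    map_smul, smul_eq_mul, Polynomial.coe_aeval_eq_eval] at hco
  have hfac : (m ! : ℚ) ≠ 0 := by exact_mod_cast Nat.factorial_ne_zero m
  field_simp at hco ⊢
  rw [← Finset.sum_div] at hco
  field_simp at hco
  apply mul_right_cancel₀ hfac
  linear_combination (m ! : ℚ) * hco

end AuxLemmas

/-- The generalized Bernoulli number can be computed using any positive multiple `F` of
the conductor of `ψ`. -/
theorem generalBernoulliNumber_eq_sum_of_dvd {S : Type*} [CommSemiring S] [Algebra ℚ S]
    {n : ℕ} (ψ : DirichletChar S n) (m : ℕ) (F : ℕ) (hF : 0 < F)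
    (hdvd : ψ.conductor ∣ F) :
    generalBernoulliNumber ψ m =
      algebraMap ℚ S ((F : ℚ) ^ ((m : ℤ) - 1)) *
        ∑ a ∈ Finset.range F,
          ψ.assoPrimitive.asso (a.succ : ZMod ψ.conductor) *
            algebraMap ℚ S ((Polynomial.bernoulli m).eval ((a.succ : ℚ) / (F : ℚ))) := by
  obtain ⟨d, hd⟩ := hdvd
  have hc0 : ψ.conductor ≠ 0 := by
    intro h
    rw [h, zero_mul] at hd
    omega
  have hd0 : d ≠ 0 := by
    intro h
    rw [h, Nat.mul_zero] at hd
    omega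
  unfold generalBernoulliNumber
  subst hd
  set c := ψ.conductor with hcdef
  have hc' : (c:ℚ) ≠ 0 := Nat.cast_ne_zero.2 hc0
  have hd' : (d:ℚ) ≠ 0 := Nat.cast_ne_zero.2 hd0
  have key : ∀ r : ℕ, (((c*d : ℕ)):ℚ)^((m:ℤ)-1) * ∑ j ∈ Finset.range d,
      (Polynomial.bernoulli m).eval ((((j*c+r : ℕ).succ : ℚ))/(((c*d : ℕ)):ℚ))
      = (c:ℚ)^((m:ℤ)-1) * (Polynomial.bernoulli m).eval (((r.succ : ℚ))/(c:ℚ)) := by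
    intro r
    have haux := bernoulli_eval_mul_aux m d hd0 (((r:ℚ)+1)/((c:ℚ)*(d:ℚ)))
    have harg : ∀ j : ℕ, ((r:ℚ)+1)/((c:ℚ)*(d:ℚ)) + (j:ℚ)/(d:ℚ)
        = (((j*c+r : ℕ).succ : ℚ))/(((c*d : ℕ)):ℚ) := by
      intro j
      push_cast
      field_simp
      ring
    have harg2 : (d:ℚ) * (((r:ℚ)+1)/((c:ℚ)*(d:ℚ))) = ((r.succ : ℚ))/(c:ℚ) := by
      push_cast
      field_simp
    simp_rw [harg, harg2] at haux
    rw [haux, ← mul_assoc, aux_scal c d hc' hd' m]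
  calc algebraMap ℚ S ((c:ℚ)^((m:ℤ)-1)) * ∑ a ∈ Finset.range c,
        ψ.assoPrimitive.asso (a.succ : ZMod c) *
          algebraMap ℚ S ((Polynomial.bernoulli m).eval ((a.succ : ℚ) / (c : ℚ)))
      = ∑ r ∈ Finset.range c, ψ.assoPrimitive.asso (r.succ : ZMod c) *
          algebraMap ℚ S ((c:ℚ)^((m:ℤ)-1) *
            (Polynomial.bernoulli m).eval ((r.succ : ℚ) / (c : ℚ))) := by
        rw [Finset.mul_sum]
        refine Finset.sum_congr rfl fun a _ => ?_
        rw [map_mul]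
        ring
    _ = ∑ r ∈ Finset.range c, ψ.assoPrimitive.asso (r.succ : ZMod c) *
          algebraMap ℚ S ((((c*d : ℕ)):ℚ)^((m:ℤ)-1) * ∑ j ∈ Finset.range d,
            (Polynomial.bernoulli m).eval ((((j*c+r : ℕ).succ : ℚ))/(((c*d : ℕ)):ℚ))) := by
        refine Finset.sum_congr rfl fun r _ => ?_
        rw [key r]
    _ = algebraMap ℚ S ((((c*d : ℕ)):ℚ) ^ ((m : ℤ) - 1)) *
        ∑ a ∈ Finset.range (c*d),
          ψ.assoPrimitive.asso (a.succ : ZMod c) *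
            algebraMap ℚ S ((Polynomial.bernoulli m).eval ((a.succ : ℚ) / (((c*d : ℕ)) : ℚ))) := by
        rw [aux_sum_range_mul c d (fun a => ψ.assoPrimitive.asso (a.succ : ZMod c) *
          algebraMap ℚ S ((Polynomial.bernoulli m).eval ((a.succ : ℚ) / (((c*d : ℕ)) : ℚ))))]
        rw [Finset.mul_sum]
        refine Finset.sum_congr rfl fun r _ => ?_
        rw [map_mul, map_sum, Finset.mul_sum, Finset.mul_sum, Finset.mul_sum]
        refine Finset.sum_congr rfl fun j _ => ?_
        have hzmod : (((j*c+r : ℕ).succ : ℕ) : ZMod c) = ((r.succ : ℕ) : ZMod c) := by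
          push_cast
          simp [ZMod.natCast_self]
        rw [hzmod]
        ring
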